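/- (Unselected-mass comparison.) Suppose Pr(Y>0|A) ≥ Pr(Y>0|B) and let π be any optimal policy (maximizer of J) for some λ ≥ 0 and admissible g. With f(y',0) = p(y'|A)·(1 − π(A,y')) − p(y'|B)·(1 − π(B,y')), one has ∑_{y'} |f(y',0)| ≤ ∑_{y'} |p(y'|A) − p(y'|B)|. -/
import Mathlib


/-!
Static setting: `Y` is a finite set of nonzero real qualifications; the two groups
`A`/`B` are encoded as `true`/`false`; `p c y` is the joint pmf on group × qualification.
-/

open Finset Filter Topology
open scoped Classical

noncomputable section

/-- Marginal probability of group `c`. -/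
def pG (Y : Finset ℝ) (p : Bool → ℝ → ℝ) (c : Bool) : ℝ := ∑ y ∈ Y, p c y

/-- Conditional pmf `p(y|c)`. -/
def pCond (Y : Finset ℝ) (p : Bool → ℝ → ℝ) (c : Bool) (y : ℝ) : ℝ := p c y / pG Y p c

/-- `p` is a pmf on `{A,B} × Y`, with positive group marginals, and all
qualifications in `Y` are nonzero. -/
def IsPMF (Y : Finset ℝ) (p : Bool → ℝ → ℝ) : Prop :=
  (∀ y ∈ Y, y ≠ 0) ∧ (∀ c, ∀ y ∈ Y, 0 ≤ p c y) ∧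
    (∑ c : Bool, ∑ y ∈ Y, p c y) = 1 ∧ (∀ c, 0 < pG Y p c)

/-- A policy assigns selection probabilities in `[0,1]`. -/
def Admissible (Y : Finset ℝ) (π : Bool → ℝ → ℝ) : Prop :=
  ∀ c, ∀ y ∈ Y, 0 ≤ π c y ∧ π c y ≤ 1

/-- Institution utility `U(π) = ∑ p(c,y)·y·π(c,y)`. -/
def util (Y : Finset ℝ) (p π : Bool → ℝ → ℝ) : ℝ :=
  ∑ c : Bool, ∑ y ∈ Y, p c y * y * π c y

/-- Selection rate of group `c`. -/
def selRate (Y : Finset ℝ) (p π : Bool → ℝ → ℝ) (c : Bool) : ℝ :=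
  ∑ y ∈ Y, pCond Y p c y * π c y

/-- Disparity `Δ(π)`. -/
def disp (Y : Finset ℝ) (p π : Bool → ℝ → ℝ) : ℝ :=
  |selRate Y p π true - selRate Y p π false|

/-- Penalized objective `J(π) = U(π) − λ·g(Δ(π))`. -/
def obj (Y : Finset ℝ) (p : Bool → ℝ → ℝ) (g : ℝ → ℝ) (lam : ℝ) (π : Bool → ℝ → ℝ) : ℝ :=
  util Y p π - lam * g (disp Y p π)

/-- Optimal policy: admissible maximizer of `J`. -/
def IsOptimal (Y : Finset ℝ) (p : Bool → ℝ → ℝ) (g : ℝ → ℝ) (lam : ℝ)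
    (π : Bool → ℝ → ℝ) : Prop :=
  Admissible Y π ∧ ∀ π', Admissible Y π' → obj Y p g lam π' ≤ obj Y p g lam π

/-- `g` is nondecreasing, nonnegative, convex on `[0,∞)` with `g 0 = 0`. -/
def AdmissiblePenalty (g : ℝ → ℝ) : Prop :=
  g 0 = 0 ∧ MonotoneOn g (Set.Ici 0) ∧ ConvexOn ℝ (Set.Ici 0) g ∧
    ∀ x ∈ Set.Ici (0 : ℝ), 0 ≤ g x

/-- `Pr(Y > 0 | c)`. -/
def posRate (Y : Finset ℝ) (p : Bool → ℝ → ℝ) (c : Bool) : ℝ :=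
  ∑ y ∈ Y.filter (fun y => 0 < y), pCond Y p c y

/-- `Δ_UM = Pr(Y>0|A) − Pr(Y>0|B)`. -/
def dUM (Y : Finset ℝ) (p : Bool → ℝ → ℝ) : ℝ := posRate Y p true - posRate Y p false

/-- `E[Y₊] = ∑_{c, y>0} p(c,y)·y`, the unconstrained maximal utility. -/
def eyPos (Y : Finset ℝ) (p : Bool → ℝ → ℝ) : ℝ :=
  ∑ c : Bool, ∑ y ∈ Y.filter (fun y => 0 < y), p c y * y

/-- The index set `𝒯_e`. -/
def TE (Y : Finset ℝ) (p : Bool → ℝ → ℝ) : Finset (ℝ × Bool) :=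
  (Y ×ˢ (Finset.univ : Finset Bool)).filter
    (fun yc => (yc.2 = true ∧ 0 < yc.1 ∧ 0 < pCond Y p true yc.1) ∨
               (yc.2 = false ∧ yc.1 < 0 ∧ 0 < pCond Y p false yc.1))

-- ## Auxiliary machinery

lemma q_nonneg {Y : Finset ℝ} {p : Bool → ℝ → ℝ} (hp : IsPMF Y p) (c : Bool) {y : ℝ}
    (hy : y ∈ Y) : 0 ≤ pCond Y p c y :=
  div_nonneg (hp.2.1 c y hy) (le_of_lt (hp.2.2.2 c))

lemma p_eq {Y : Finset ℝ} {p : Bool → ℝ → ℝ} (hp : IsPMF Y p) (c : Bool) (y : ℝ) :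
    p c y = pCond Y p c y * pG Y p c := by
  rw [pCond, div_mul_cancel₀ _ (ne_of_gt (hp.2.2.2 c))]

/-- Pointwise update of a policy. -/
def upd (π : Bool → ℝ → ℝ) (c₀ : Bool) (y₀ t : ℝ) : Bool → ℝ → ℝ :=
  fun c y => if c = c₀ ∧ y = y₀ then t else π c y

lemma sum_w_upd (Y : Finset ℝ) (w : ℝ → ℝ) (π : Bool → ℝ → ℝ) (c₀ : Bool) (y₀ t : ℝ)
    (hy : y₀ ∈ Y) (c : Bool) :
    ∑ y ∈ Y, w y * upd π c₀ y₀ t c y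
      = (∑ y ∈ Y, w y * π c y) + (if c = c₀ then w y₀ * (t - π c y₀) else 0) := by
  by_cases hc : c = c₀
  · subst hc
    rw [if_pos rfl, ← Finset.add_sum_erase _ (fun y => w y * upd π c y₀ t c y) hy,
        ← Finset.add_sum_erase _ (fun y => w y * π c y) hy]
    have h1 : ∀ y ∈ Y.erase y₀, w y * upd π c y₀ t c y = w y * π c y := by
      intro y hy'
      have hne := Finset.ne_of_mem_erase hy'
      simp [upd, hne]
    rw [Finset.sum_congr rfl h1]
    simp only [upd]
    norm_num
    ring
  · simp only [if_neg hc, add_zero]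
    refine Finset.sum_congr rfl fun y _ => ?_
    simp [upd, hc]

lemma selRate_upd (Y : Finset ℝ) (p π : Bool → ℝ → ℝ) (c₀ : Bool) (y₀ t : ℝ)
    (hy : y₀ ∈ Y) (c : Bool) :
    selRate Y p (upd π c₀ y₀ t) c
      = selRate Y p π c + (if c = c₀ then pCond Y p c y₀ * (t - π c y₀) else 0) :=
  sum_w_upd Y (fun y => pCond Y p c y) π c₀ y₀ t hy c

lemma util_upd (Y : Finset ℝ) (p π : Bool → ℝ → ℝ) (c₀ : Bool) (y₀ t : ℝ)
    (hy : y₀ ∈ Y) :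
    util Y p (upd π c₀ y₀ t) = util Y p π + p c₀ y₀ * y₀ * (t - π c₀ y₀) := by
  have h : ∀ c : Bool, ∑ y ∈ Y, p c y * y * upd π c₀ y₀ t c y
      = (∑ y ∈ Y, p c y * y * π c y) + (if c = c₀ then p c y₀ * y₀ * (t - π c y₀) else 0) := by
    intro c
    have := sum_w_upd Y (fun y => p c y * y) π c₀ y₀ t hy c
    simpa [mul_assoc] using this
  unfold util
  rw [Fintype.sum_bool, Fintype.sum_bool, h, h]
  cases c₀ <;> simp <;> ring

lemma admissible_upd {Y : Finset ℝ} {π : Bool → ℝ → ℝ} (h : Admissible Y π)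
    (c₀ : Bool) (y₀ t : ℝ) (h0 : 0 ≤ t) (h1 : t ≤ 1) :
    Admissible Y (upd π c₀ y₀ t) := by
  intro c y hy
  by_cases hc : c = c₀ ∧ y = y₀
  · simp only [upd, if_pos hc]; exact ⟨h0, h1⟩
  · simp only [upd, if_neg hc]; exact h c y hy

lemma not_improve {Y : Finset ℝ} {p : Bool → ℝ → ℝ} {g : ℝ → ℝ} {lam : ℝ}
    {π : Bool → ℝ → ℝ} (hg : AdmissiblePenalty g) (hlam : 0 ≤ lam)
    (hopt : IsOptimal Y p g lam π) (π' : Bool → ℝ → ℝ) (ha : Admissible Y π')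
    (hU : util Y p π < util Y p π') (hD : disp Y p π' ≤ disp Y p π) : False := by
  have h := hopt.2 π' ha
  have hd1 : (0:ℝ) ≤ disp Y p π' := abs_nonneg _
  have hd2 : (0:ℝ) ≤ disp Y p π := abs_nonneg _
  have hm : g (disp Y p π') ≤ g (disp Y p π) :=
    hg.2.1 (Set.mem_Ici.mpr hd1) (Set.mem_Ici.mpr hd2) hD
  have := mul_le_mul_of_nonneg_left hm hlam
  unfold obj at h
  linarith

section Perturb

variable {Y : Finset ℝ} {p : Bool → ℝ → ℝ} {g : ℝ → ℝ} {lam : ℝ} {π : Bool → ℝ → ℝ}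
variable (hp : IsPMF Y p) (hg : AdmissiblePenalty g) (hlam : 0 ≤ lam)
variable (hopt : IsOptimal Y p g lam π)

include hp hg hlam hopt

/-- P1: cannot have an unselected positive in the group with strictly smaller
selection rate. -/
lemma P1 (c₀ : Bool) (y₀ : ℝ) (hy : y₀ ∈ Y) (hy0 : 0 < y₀)
    (hq : 0 < pCond Y p c₀ y₀) (hπ : π c₀ y₀ < 1)
    (hS : selRate Y p π c₀ < selRate Y p π (!c₀)) : False := by
  have hadm := hopt.1
  have hπ0 := (hadm c₀ y₀ hy).1
  set q := pCond Y p c₀ y₀ with hqdef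
  set d := selRate Y p π (!c₀) - selRate Y p π c₀ with hd
  have hd0 : 0 < d := by simp only [hd]; linarith
  set ε := min (1 - π c₀ y₀) (d / q) with hε
  have hε0 : 0 < ε := lt_min (by linarith) (div_pos hd0 hq)
  have hεle : q * ε ≤ d := by
    have h1 : ε ≤ d / q := min_le_right _ _
    have h2 : q * ε ≤ q * (d / q) := mul_le_mul_of_nonneg_left h1 (le_of_lt hq)
    rwa [mul_div_cancel₀ _ (ne_of_gt hq)] at h2
  set t := π c₀ y₀ + ε with ht
  have ha' : Admissible Y (upd π c₀ y₀ t) := by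
    refine admissible_upd hadm _ _ _ (by linarith) ?_
    have := min_le_left (1 - π c₀ y₀) (d / q)
    simp only [ht]; linarith [hε0, this]
  have hppos : 0 < p c₀ y₀ := by
    rw [p_eq hp c₀ y₀]; exact mul_pos hq (hp.2.2.2 c₀)
  have hU : util Y p π < util Y p (upd π c₀ y₀ t) := by
    rw [util_upd Y p π c₀ y₀ t hy]
    have : 0 < p c₀ y₀ * y₀ * (t - π c₀ y₀) := by
      have : t - π c₀ y₀ = ε := by rw [ht]; ring
      rw [this]; positivity
    linarith
  have hSr : ∀ c, selRate Y p (upd π c₀ y₀ t) c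
      = selRate Y p π c + (if c = c₀ then q * ε else 0) := by
    intro c
    rw [selRate_upd Y p π c₀ y₀ t hy c]
    have he : t - π c₀ y₀ = ε := by rw [ht]; ring
    by_cases hc : c = c₀
    · subst hc; rw [if_pos rfl, if_pos rfl, he]
    · rw [if_neg hc, if_neg hc]
  have hD : disp Y p (upd π c₀ y₀ t) ≤ disp Y p π := by
    have h1 := hSr true
    have h2 := hSr false
    have hqε : 0 < q * ε := mul_pos hq hε0
    unfold disp
    cases c₀
    · simp only [Bool.not_false] at hS hd
      norm_num at h1 h2
      rw [h1, h2, abs_of_nonneg (by linarith), abs_of_nonneg (by linarith)]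
      linarith
    · simp only [Bool.not_true] at hS hd
      norm_num at h1 h2
      rw [h1, h2, abs_of_nonpos (by linarith), abs_of_nonpos (by linarith)]
      linarith
  exact not_improve hg hlam hopt _ ha' hU hD

/-- P2: cannot have a selected negative in the group with strictly larger
selection rate. -/
lemma P2 (c₀ : Bool) (y₀ : ℝ) (hy : y₀ ∈ Y) (hy0 : y₀ < 0)
    (hq : 0 < pCond Y p c₀ y₀) (hπ : 0 < π c₀ y₀)
    (hS : selRate Y p π (!c₀) < selRate Y p π c₀) : False := by
  have hadm := hopt.1
  have hπ1 := (hadm c₀ y₀ hy).2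
  set q := pCond Y p c₀ y₀ with hqdef
  set d := selRate Y p π c₀ - selRate Y p π (!c₀) with hd
  have hd0 : 0 < d := by simp only [hd]; linarith
  set ε := min (π c₀ y₀) (d / q) with hε
  have hε0 : 0 < ε := lt_min hπ (div_pos hd0 hq)
  have hεle : q * ε ≤ d := by
    have h1 : ε ≤ d / q := min_le_right _ _
    have h2 : q * ε ≤ q * (d / q) := mul_le_mul_of_nonneg_left h1 (le_of_lt hq)
    rwa [mul_div_cancel₀ _ (ne_of_gt hq)] at h2
  set t := π c₀ y₀ - ε with ht
  have ha' : Admissible Y (upd π c₀ y₀ t) := by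
    refine admissible_upd hadm _ _ _ ?_ (by simp only [ht]; linarith)
    have := min_le_left (π c₀ y₀) (d / q)
    simp only [ht]; linarith
  have hppos : 0 < p c₀ y₀ := by
    rw [p_eq hp c₀ y₀]; exact mul_pos hq (hp.2.2.2 c₀)
  have hU : util Y p π < util Y p (upd π c₀ y₀ t) := by
    rw [util_upd Y p π c₀ y₀ t hy]
    have h3 : t - π c₀ y₀ = -ε := by rw [ht]; ring
    have : 0 < p c₀ y₀ * y₀ * (t - π c₀ y₀) := by
      rw [h3]
      have : p c₀ y₀ * y₀ * -ε = (p c₀ y₀ * ε) * (-y₀) := by ring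
      rw [this]
      exact mul_pos (mul_pos hppos hε0) (by linarith)
    linarith
  have hSr : ∀ c, selRate Y p (upd π c₀ y₀ t) c
      = selRate Y p π c - (if c = c₀ then q * ε else 0) := by
    intro c
    rw [selRate_upd Y p π c₀ y₀ t hy c]
    have he : t - π c₀ y₀ = -ε := by rw [ht]; ring
    by_cases hc : c = c₀
    · subst hc; rw [if_pos rfl, if_pos rfl, he]; ring
    · rw [if_neg hc, if_neg hc]; ring
  have hD : disp Y p (upd π c₀ y₀ t) ≤ disp Y p π := by
    have h1 := hSr true
    have h2 := hSr false
    have hqε : 0 < q * ε := mul_pos hq hε0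
    unfold disp
    cases c₀
    · simp only [Bool.not_false] at hS hd
      norm_num at h1 h2
      rw [h1, h2, abs_of_nonpos (by linarith), abs_of_nonpos (by linarith)]
      linarith
    · simp only [Bool.not_true] at hS hd
      norm_num at h1 h2
      rw [h1, h2, abs_of_nonneg (by linarith), abs_of_nonneg (by linarith)]
      linarith
  exact not_improve hg hlam hopt _ ha' hU hD

/-- P3: within a group, cannot have a selected negative together with an
unselected positive. -/
lemma P3 (c₀ : Bool) (y₀ y₁ : ℝ) (hy₀ : y₀ ∈ Y) (hy₁ : y₁ ∈ Y)
    (h0 : y₀ < 0) (h1 : 0 < y₁)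
    (hq₀ : 0 < pCond Y p c₀ y₀) (hq₁ : 0 < pCond Y p c₀ y₁)
    (hπ₀ : 0 < π c₀ y₀) (hπ₁ : π c₀ y₁ < 1) : False := by
  have hadm := hopt.1
  have hπ₀1 := (hadm c₀ y₀ hy₀).2
  have hπ₁0 := (hadm c₀ y₁ hy₁).1
  have hne : y₁ ≠ y₀ := by intro h; rw [h] at h1; linarith
  set q₀ := pCond Y p c₀ y₀ with hq₀def
  set q₁ := pCond Y p c₀ y₁ with hq₁def
  set δ := min (π c₀ y₀ * q₀) ((1 - π c₀ y₁) * q₁) with hδ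
  have hδ0 : 0 < δ := lt_min (mul_pos hπ₀ hq₀) (mul_pos (by linarith) hq₁)
  have hd₀ : δ / q₀ ≤ π c₀ y₀ := by
    rw [div_le_iff₀ hq₀]; exact min_le_left _ _
  have hd₁ : δ / q₁ ≤ 1 - π c₀ y₁ := by
    rw [div_le_iff₀ hq₁]; exact min_le_right _ _
  have hd₀0 : 0 < δ / q₀ := div_pos hδ0 hq₀
  have hd₁0 : 0 < δ / q₁ := div_pos hδ0 hq₁
  set t₀ := π c₀ y₀ - δ / q₀ with ht₀
  set t₁ := π c₀ y₁ + δ / q₁ with ht₁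
  set π₁ := upd π c₀ y₀ t₀ with hπ₁def
  set π₂ := upd π₁ c₀ y₁ t₁ with hπ₂def
  have hval : π₁ c₀ y₁ = π c₀ y₁ := by
    simp [hπ₁def, upd, hne]
  have ha₁ : Admissible Y π₁ :=
    admissible_upd hadm _ _ _ (by rw [ht₀]; linarith) (by rw [ht₀]; linarith)
  have ha₂ : Admissible Y π₂ :=
    admissible_upd ha₁ _ _ _ (by rw [ht₁]; linarith) (by rw [ht₁]; linarith)
  have hcan₀ : q₀ * (δ / q₀) = δ := mul_div_cancel₀ _ (ne_of_gt hq₀)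
  have hcan₁ : q₁ * (δ / q₁) = δ := mul_div_cancel₀ _ (ne_of_gt hq₁)
  have hSr : ∀ c, selRate Y p π₂ c = selRate Y p π c := by
    intro c
    rw [hπ₂def, selRate_upd Y p π₁ c₀ y₁ t₁ hy₁ c, hπ₁def,
      selRate_upd Y p π c₀ y₀ t₀ hy₀ c]
    rw [show (upd π c₀ y₀ t₀) c y₁ = π c y₁ by simp [upd, hne]]
    by_cases hc : c = c₀
    · subst hc
      rw [if_pos rfl, if_pos rfl, ht₀, ht₁]
      have e0 : pCond Y p c y₀ * (π c y₀ - δ / q₀ - π c y₀) = -δ := by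
        rw [hq₀def] at hcan₀; ring_nf; ring_nf at hcan₀; linarith [hcan₀]
      have e1 : pCond Y p c y₁ * (π c y₁ + δ / q₁ - π c y₁) = δ := by
        rw [hq₁def] at hcan₁; ring_nf; ring_nf at hcan₁; linarith [hcan₁]
      rw [e0, e1] -- might need ring after
      ring
    · rw [if_neg hc, if_neg hc]; ring
  have hD : disp Y p π₂ ≤ disp Y p π := by
    unfold disp; rw [hSr true, hSr false]
  have hpg := hp.2.2.2 c₀
  have hU : util Y p π < util Y p π₂ := by
    rw [hπ₂def, util_upd Y p π₁ c₀ y₁ t₁ hy₁, hπ₁def, util_upd Y p π c₀ y₀ t₀ hy₀]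
    rw [show (upd π c₀ y₀ t₀) c₀ y₁ = π c₀ y₁ by simp [upd, hne]]
    have key : p c₀ y₀ * y₀ * (t₀ - π c₀ y₀) + p c₀ y₁ * y₁ * (t₁ - π c₀ y₁)
        = pG Y p c₀ * δ * (y₁ - y₀) := by
      rw [p_eq hp c₀ y₀, p_eq hp c₀ y₁, ht₀, ht₁, ← hq₀def, ← hq₁def]
      field_simp
      ring
    have hpos : 0 < pG Y p c₀ * δ * (y₁ - y₀) :=
      mul_pos (mul_pos hpg hδ0) (by linarith)
    linarith [key]
  exact not_improve hg hlam hopt _ ha₂ hU hD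

/-- P4: cannot have unselected positives in both groups simultaneously. -/
lemma P4 (y₀ y₁ : ℝ) (hy₀ : y₀ ∈ Y) (hy₁ : y₁ ∈ Y)
    (h0 : 0 < y₀) (h1 : 0 < y₁)
    (hq₀ : 0 < pCond Y p false y₀) (hq₁ : 0 < pCond Y p true y₁)
    (hπ₀ : π false y₀ < 1) (hπ₁ : π true y₁ < 1) : False := by
  have hadm := hopt.1
  have hπ₀0 := (hadm false y₀ hy₀).1
  have hπ₁0 := (hadm true y₁ hy₁).1
  set q₀ := pCond Y p false y₀ with hq₀def
  set q₁ := pCond Y p true y₁ with hq₁def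
  set δ := min ((1 - π false y₀) * q₀) ((1 - π true y₁) * q₁) with hδ
  have hδ0 : 0 < δ := lt_min (mul_pos (by linarith) hq₀) (mul_pos (by linarith) hq₁)
  have hd₀ : δ / q₀ ≤ 1 - π false y₀ := by
    rw [div_le_iff₀ hq₀]; exact min_le_left _ _
  have hd₁ : δ / q₁ ≤ 1 - π true y₁ := by
    rw [div_le_iff₀ hq₁]; exact min_le_right _ _
  have hd₀0 : 0 < δ / q₀ := div_pos hδ0 hq₀
  have hd₁0 : 0 < δ / q₁ := div_pos hδ0 hq₁
  set t₀ := π false y₀ + δ / q₀ with ht₀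
  set t₁ := π true y₁ + δ / q₁ with ht₁
  set π₁' := upd π false y₀ t₀ with hπ₁def
  set π₂ := upd π₁' true y₁ t₁ with hπ₂def
  have hval : π₁' true y₁ = π true y₁ := by simp [hπ₁def, upd]
  have ha₁ : Admissible Y π₁' :=
    admissible_upd hadm _ _ _ (by rw [ht₀]; linarith) (by rw [ht₀]; linarith)
  have ha₂ : Admissible Y π₂ :=
    admissible_upd ha₁ _ _ _ (by rw [ht₁]; linarith) (by rw [ht₁]; linarith)
  have hcan₀ : q₀ * (δ / q₀) = δ := mul_div_cancel₀ _ (ne_of_gt hq₀)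
  have hcan₁ : q₁ * (δ / q₁) = δ := mul_div_cancel₀ _ (ne_of_gt hq₁)
  have hSt : selRate Y p π₂ true = selRate Y p π true + δ := by
    rw [hπ₂def, selRate_upd Y p π₁' true y₁ t₁ hy₁ true, hval, if_pos rfl, hπ₁def,
      selRate_upd Y p π false y₀ t₀ hy₀ true, if_neg (by simp), ht₁, ← hq₁def]
    rw [show q₁ * (π true y₁ + δ / q₁ - π true y₁) = q₁ * (δ / q₁) by ring, hcan₁]
    ring
  have hSf : selRate Y p π₂ false = selRate Y p π false + δ := by
    rw [hπ₂def, selRate_upd Y p π₁' true y₁ t₁ hy₁ false, if_neg (by simp), hπ₁def,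
      selRate_upd Y p π false y₀ t₀ hy₀ false, if_pos rfl, ht₀, ← hq₀def]
    rw [show q₀ * (π false y₀ + δ / q₀ - π false y₀) = q₀ * (δ / q₀) by ring, hcan₀]
    ring
  have hD : disp Y p π₂ ≤ disp Y p π := by
    unfold disp; rw [hSt, hSf]
    rw [show selRate Y p π true + δ - (selRate Y p π false + δ)
      = selRate Y p π true - selRate Y p π false by ring]
  have hU : util Y p π < util Y p π₂ := by
    rw [hπ₂def, util_upd Y p π₁' true y₁ t₁ hy₁, hval, hπ₁def,
      util_upd Y p π false y₀ t₀ hy₀]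
    have k₀ : p false y₀ * y₀ * (t₀ - π false y₀) = pG Y p false * δ * y₀ := by
      rw [p_eq hp false y₀, ht₀, ← hq₀def]
      field_simp
      ring
    have k₁ : p true y₁ * y₁ * (t₁ - π true y₁) = pG Y p true * δ * y₁ := by
      rw [p_eq hp true y₁, ht₁, ← hq₁def]
      field_simp
      ring
    rw [k₀, k₁]
    have := mul_pos (mul_pos (hp.2.2.2 false) hδ0) h0
    have := mul_pos (mul_pos (hp.2.2.2 true) hδ0) h1
    linarith
  exact not_improve hg hlam hopt _ ha₂ hU hD

/-- P5: cannot have selected negatives in both groups simultaneously. -/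
lemma P5 (y₀ y₁ : ℝ) (hy₀ : y₀ ∈ Y) (hy₁ : y₁ ∈ Y)
    (h0 : y₀ < 0) (h1 : y₁ < 0)
    (hq₀ : 0 < pCond Y p true y₀) (hq₁ : 0 < pCond Y p false y₁)
    (hπ₀ : 0 < π true y₀) (hπ₁ : 0 < π false y₁) : False := by
  have hadm := hopt.1
  have hπ₀1 := (hadm true y₀ hy₀).2
  have hπ₁1 := (hadm false y₁ hy₁).2
  set q₀ := pCond Y p true y₀ with hq₀def
  set q₁ := pCond Y p false y₁ with hq₁def
  set δ := min (π true y₀ * q₀) (π false y₁ * q₁) with hδ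
  have hδ0 : 0 < δ := lt_min (mul_pos hπ₀ hq₀) (mul_pos hπ₁ hq₁)
  have hd₀ : δ / q₀ ≤ π true y₀ := by
    rw [div_le_iff₀ hq₀]; exact min_le_left _ _
  have hd₁ : δ / q₁ ≤ π false y₁ := by
    rw [div_le_iff₀ hq₁]; exact min_le_right _ _
  have hd₀0 : 0 < δ / q₀ := div_pos hδ0 hq₀
  have hd₁0 : 0 < δ / q₁ := div_pos hδ0 hq₁
  set t₀ := π true y₀ - δ / q₀ with ht₀
  set t₁ := π false y₁ - δ / q₁ with ht₁
  set π₁' := upd π true y₀ t₀ with hπ₁def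
  set π₂ := upd π₁' false y₁ t₁ with hπ₂def
  have hval : π₁' false y₁ = π false y₁ := by simp [hπ₁def, upd]
  have ha₁ : Admissible Y π₁' :=
    admissible_upd hadm _ _ _ (by rw [ht₀]; linarith) (by rw [ht₀]; linarith)
  have ha₂ : Admissible Y π₂ :=
    admissible_upd ha₁ _ _ _ (by rw [ht₁]; linarith) (by rw [ht₁]; linarith)
  have hcan₀ : q₀ * (δ / q₀) = δ := mul_div_cancel₀ _ (ne_of_gt hq₀)
  have hcan₁ : q₁ * (δ / q₁) = δ := mul_div_cancel₀ _ (ne_of_gt hq₁)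
  have hSt : selRate Y p π₂ true = selRate Y p π true - δ := by
    rw [hπ₂def, selRate_upd Y p π₁' false y₁ t₁ hy₁ true, if_neg (by simp), hπ₁def,
      selRate_upd Y p π true y₀ t₀ hy₀ true, if_pos rfl, ht₀, ← hq₀def]
    rw [show q₀ * (π true y₀ - δ / q₀ - π true y₀) = -(q₀ * (δ / q₀)) by ring, hcan₀]
    ring
  have hSf : selRate Y p π₂ false = selRate Y p π false - δ := by
    rw [hπ₂def, selRate_upd Y p π₁' false y₁ t₁ hy₁ false, hval, if_pos rfl, hπ₁def,
      selRate_upd Y p π true y₀ t₀ hy₀ false, if_neg (by simp), ht₁, ← hq₁def]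
    rw [show q₁ * (π false y₁ - δ / q₁ - π false y₁) = -(q₁ * (δ / q₁)) by ring, hcan₁]
    ring
  have hD : disp Y p π₂ ≤ disp Y p π := by
    unfold disp; rw [hSt, hSf]
    rw [show selRate Y p π true - δ - (selRate Y p π false - δ)
      = selRate Y p π true - selRate Y p π false by ring]
  have hU : util Y p π < util Y p π₂ := by
    rw [hπ₂def, util_upd Y p π₁' false y₁ t₁ hy₁, hval, hπ₁def,
      util_upd Y p π true y₀ t₀ hy₀]
    have k₀ : p true y₀ * y₀ * (t₀ - π true y₀) = pG Y p true * δ * (-y₀) := by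
      rw [p_eq hp true y₀, ht₀, ← hq₀def]
      field_simp
      ring
    have k₁ : p false y₁ * y₁ * (t₁ - π false y₁) = pG Y p false * δ * (-y₁) := by
      rw [p_eq hp false y₁, ht₁, ← hq₁def]
      field_simp
      ring
    rw [k₀, k₁]
    have := mul_pos (mul_pos (hp.2.2.2 true) hδ0) (by linarith : (0:ℝ) < -y₀)
    have := mul_pos (mul_pos (hp.2.2.2 false) hδ0) (by linarith : (0:ℝ) < -y₁)
    linarith
  exact not_improve hg hlam hopt _ ha₂ hU hD

end Perturb

-- ## Counting lemmas

lemma selRate_split (Y : Finset ℝ) (p π : Bool → ℝ → ℝ) (c : Bool) :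
    selRate Y p π c = (∑ y ∈ Y.filter (fun y => 0 < y), pCond Y p c y * π c y)
      + ∑ y ∈ Y.filter (fun y => ¬ 0 < y), pCond Y p c y * π c y :=
  (Finset.sum_filter_add_sum_filter_not Y _ _).symm

lemma pos_part_full {Y : Finset ℝ} {p π : Bool → ℝ → ℝ} {c : Bool} (hp : IsPMF Y p)
    (hfull : ∀ y ∈ Y, 0 < y → 0 < pCond Y p c y → π c y = 1) :
    ∑ y ∈ Y.filter (fun y => 0 < y), pCond Y p c y * π c y = posRate Y p c := by
  rw [posRate]
  refine Finset.sum_congr rfl fun y hy => ?_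
  obtain ⟨hyY, hpos⟩ := Finset.mem_filter.mp hy
  rcases (q_nonneg hp c hyY).lt_or_eq with hq | hq
  · rw [hfull y hyY hpos hq, mul_one]
  · rw [← hq, zero_mul]

lemma neg_part_zero {Y : Finset ℝ} {p π : Bool → ℝ → ℝ} {c : Bool} (hp : IsPMF Y p)
    (hnn : ∀ y ∈ Y, y < 0 → 0 < pCond Y p c y → π c y = 0) :
    ∑ y ∈ Y.filter (fun y => ¬ 0 < y), pCond Y p c y * π c y = 0 := by
  refine Finset.sum_eq_zero fun y hy => ?_
  obtain ⟨hyY, hnp⟩ := Finset.mem_filter.mp hy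
  have hyneg : y < 0 := lt_of_le_of_ne (not_lt.mp hnp) (hp.1 y hyY)
  rcases (q_nonneg hp c hyY).lt_or_eq with hq | hq
  · rw [hnn y hyY hyneg hq, mul_zero]
  · rw [← hq, zero_mul]

lemma N1 {Y : Finset ℝ} {p π : Bool → ℝ → ℝ} {c : Bool} (hp : IsPMF Y p)
    (hadm : Admissible Y π)
    (hfull : ∀ y ∈ Y, 0 < y → 0 < pCond Y p c y → π c y = 1) :
    posRate Y p c ≤ selRate Y p π c := by
  rw [selRate_split, pos_part_full hp hfull]
  have h : 0 ≤ ∑ y ∈ Y.filter (fun y => ¬ 0 < y), pCond Y p c y * π c y :=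
    Finset.sum_nonneg fun y hy =>
      mul_nonneg (q_nonneg hp c (Finset.mem_filter.mp hy).1)
        (hadm c y (Finset.mem_filter.mp hy).1).1
  linarith

lemma N1s {Y : Finset ℝ} {p π : Bool → ℝ → ℝ} {c : Bool} (hp : IsPMF Y p)
    (hadm : Admissible Y π)
    (hfull : ∀ y ∈ Y, 0 < y → 0 < pCond Y p c y → π c y = 1)
    {y₀ : ℝ} (hy₀ : y₀ ∈ Y) (h0 : y₀ < 0) (hq : 0 < pCond Y p c y₀)
    (hπ : 0 < π c y₀) : posRate Y p c < selRate Y p π c := by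
  rw [selRate_split, pos_part_full hp hfull]
  have h : pCond Y p c y₀ * π c y₀
      ≤ ∑ y ∈ Y.filter (fun y => ¬ 0 < y), pCond Y p c y * π c y :=
    Finset.single_le_sum
      (fun y hy => mul_nonneg (q_nonneg hp c (Finset.mem_filter.mp hy).1)
        (hadm c y (Finset.mem_filter.mp hy).1).1)
      (Finset.mem_filter.mpr ⟨hy₀, not_lt.mpr h0.le⟩)
  have := mul_pos hq hπ
  linarith

lemma N2 {Y : Finset ℝ} {p π : Bool → ℝ → ℝ} {c : Bool} (hp : IsPMF Y p)
    (hadm : Admissible Y π)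
    (hnn : ∀ y ∈ Y, y < 0 → 0 < pCond Y p c y → π c y = 0) :
    selRate Y p π c ≤ posRate Y p c := by
  rw [selRate_split, neg_part_zero hp hnn, add_zero, posRate]
  exact Finset.sum_le_sum fun y hy =>
    mul_le_of_le_one_right (q_nonneg hp c (Finset.mem_filter.mp hy).1)
      (hadm c y (Finset.mem_filter.mp hy).1).2

lemma N2s {Y : Finset ℝ} {p π : Bool → ℝ → ℝ} {c : Bool} (hp : IsPMF Y p)
    (hadm : Admissible Y π)
    (hnn : ∀ y ∈ Y, y < 0 → 0 < pCond Y p c y → π c y = 0)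
    {y₀ : ℝ} (hy₀ : y₀ ∈ Y) (h0 : 0 < y₀) (hq : 0 < pCond Y p c y₀)
    (hπ : π c y₀ < 1) : selRate Y p π c < posRate Y p c := by
  rw [selRate_split, neg_part_zero hp hnn, add_zero, posRate]
  refine Finset.sum_lt_sum
    (fun y hy => mul_le_of_le_one_right (q_nonneg hp c (Finset.mem_filter.mp hy).1)
      (hadm c y (Finset.mem_filter.mp hy).1).2)
    ⟨y₀, Finset.mem_filter.mpr ⟨hy₀, h0⟩, ?_⟩
  exact mul_lt_of_lt_one_right hq hπ

-- ## Structure of optimal policies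

section Structure

variable {Y : Finset ℝ} {p : Bool → ℝ → ℝ} {g : ℝ → ℝ} {lam : ℝ} {π : Bool → ℝ → ℝ}
variable (hp : IsPMF Y p) (hadv : posRate Y p false ≤ posRate Y p true)
variable (hg : AdmissiblePenalty g) (hlam : 0 ≤ lam) (hopt : IsOptimal Y p g lam π)

include hp hadv hg hlam hopt

lemma L_le : selRate Y p π false ≤ selRate Y p π true := by
  by_contra hcon
  push_neg at hcon
  have hfullA : ∀ y ∈ Y, 0 < y → 0 < pCond Y p true y → π true y = 1 := by
    intro y hy hypos hq
    by_contra hne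
    have hπ : π true y < 1 := lt_of_le_of_ne (hopt.1 true y hy).2 hne
    exact P1 hp hg hlam hopt true y hy hypos hq hπ (by simpa using hcon)
  have hnnB : ∀ y ∈ Y, y < 0 → 0 < pCond Y p false y → π false y = 0 := by
    intro y hy hyneg hq
    by_contra hne
    have hπ : 0 < π false y := lt_of_le_of_ne (hopt.1 false y hy).1 (Ne.symm hne)
    exact P2 hp hg hlam hopt false y hy hyneg hq hπ (by simpa using hcon)
  have h1 := N1 hp hopt.1 hfullA
  have h2 := N2 hp hopt.1 hnnB
  linarith

lemma L_fullPosB : ∀ y ∈ Y, 0 < y → 0 < pCond Y p false y → π false y = 1 := by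
  by_contra hcon
  push_neg at hcon
  obtain ⟨y₀, hy₀, hpos₀, hq₀, hne₀⟩ := hcon
  have hπ₀ : π false y₀ < 1 := lt_of_le_of_ne (hopt.1 false y₀ hy₀).2 hne₀
  have hnnB : ∀ y ∈ Y, y < 0 → 0 < pCond Y p false y → π false y = 0 := by
    intro y hy hyneg hq
    by_contra hne
    have hπ : 0 < π false y := lt_of_le_of_ne (hopt.1 false y hy).1 (Ne.symm hne)
    exact P3 hp hg hlam hopt false y y₀ hy hy₀ hyneg hpos₀ hq hq₀ hπ hπ₀
  have hfullA : ∀ y ∈ Y, 0 < y → 0 < pCond Y p true y → π true y = 1 := by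
    intro y hy hypos hq
    by_contra hne
    have hπ : π true y < 1 := lt_of_le_of_ne (hopt.1 true y hy).2 hne
    exact P4 hp hg hlam hopt y₀ y hy₀ hy hpos₀ hypos hq₀ hq hπ₀ hπ
  have h1 : selRate Y p π false < posRate Y p false :=
    N2s hp hopt.1 hnnB hy₀ hpos₀ hq₀ hπ₀
  have h2 : posRate Y p true ≤ selRate Y p π true := N1 hp hopt.1 hfullA
  exact P1 hp hg hlam hopt false y₀ hy₀ hpos₀ hq₀ hπ₀ (by simp; linarith)

lemma L_noNegA : ∀ y ∈ Y, y < 0 → 0 < pCond Y p true y → π true y = 0 := by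
  by_contra hcon
  push_neg at hcon
  obtain ⟨y₀, hy₀, hneg₀, hq₀, hne₀⟩ := hcon
  have hπ₀ : 0 < π true y₀ := lt_of_le_of_ne (hopt.1 true y₀ hy₀).1 (Ne.symm hne₀)
  have hfullA : ∀ y ∈ Y, 0 < y → 0 < pCond Y p true y → π true y = 1 := by
    intro y hy hypos hq
    by_contra hne
    have hπ : π true y < 1 := lt_of_le_of_ne (hopt.1 true y hy).2 hne
    exact P3 hp hg hlam hopt true y₀ y hy₀ hy hneg₀ hypos hq₀ hq hπ₀ hπ
  have hnnB : ∀ y ∈ Y, y < 0 → 0 < pCond Y p false y → π false y = 0 := by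
    intro y hy hyneg hq
    by_contra hne
    have hπ : 0 < π false y := lt_of_le_of_ne (hopt.1 false y hy).1 (Ne.symm hne)
    exact P5 hp hg hlam hopt y₀ y hy₀ hy hneg₀ hyneg hq₀ hq hπ₀ hπ
  have h1 : posRate Y p true < selRate Y p π true :=
    N1s hp hopt.1 hfullA hy₀ hneg₀ hq₀ hπ₀
  have h2 : selRate Y p π false ≤ posRate Y p false := N2 hp hopt.1 hnnB
  exact P2 hp hg hlam hopt true y₀ hy₀ hneg₀ hq₀ hπ₀ (by simp; linarith)

end Structure

/-- Unselected-mass comparison. If `Pr(Y>0|A) ≥ Pr(Y>0|B)` and `π`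
is optimal, then
`∑_{y} |p(y|A)(1−π(A,y)) − p(y|B)(1−π(B,y))| ≤ ∑_{y} |p(y|A) − p(y|B)|`. -/
theorem stmt_19 (Y : Finset ℝ) (p : Bool → ℝ → ℝ) (hp : IsPMF Y p)
    (hadv : posRate Y p false ≤ posRate Y p true)
    (g : ℝ → ℝ) (hg : AdmissiblePenalty g) (lam : ℝ) (hlam : 0 ≤ lam)
    (π : Bool → ℝ → ℝ) (hopt : IsOptimal Y p g lam π) :
    ∑ y ∈ Y, |pCond Y p true y * (1 - π true y) - pCond Y p false y * (1 - π false y)| ≤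
      ∑ y ∈ Y, |pCond Y p true y - pCond Y p false y| := by
  have hadm := hopt.1
  have hfB := L_fullPosB hp hadv hg hlam hopt
  have hnA := L_noNegA hp hadv hg hlam hopt
  have hle := L_le hp hadv hg hlam hopt
  rw [← Finset.sum_filter_add_sum_filter_not Y (fun y => 0 < y)
        (fun y => |pCond Y p true y * (1 - π true y)
          - pCond Y p false y * (1 - π false y)|),
      ← Finset.sum_filter_add_sum_filter_not Y (fun y => 0 < y)
        (fun y => |pCond Y p true y - pCond Y p false y|)]
  -- pointwise bounds
  have key1 : ∑ y ∈ Y.filter (fun y => 0 < y),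
      |pCond Y p true y * (1 - π true y) - pCond Y p false y * (1 - π false y)|
      ≤ ∑ y ∈ Y.filter (fun y => 0 < y),
        (|pCond Y p true y - pCond Y p false y|
          + (pCond Y p false y - pCond Y p true y * π true y)) := by
    refine Finset.sum_le_sum fun y hy => ?_
    obtain ⟨hyY, hpos⟩ := Finset.mem_filter.mp hy
    have hq_t := q_nonneg hp true hyY
    have hq_f := q_nonneg hp false hyY
    have hπt := hadm true y hyY
    have hbf : pCond Y p false y * (1 - π false y) = 0 := by
      rcases hq_f.lt_or_eq with hq | hq
      · rw [hfB y hyY hpos hq]; ring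
      · rw [← hq, zero_mul]
    rw [hbf, sub_zero, abs_of_nonneg (mul_nonneg hq_t (by linarith [hπt.2]))]
    have habs := le_abs_self (pCond Y p true y - pCond Y p false y)
    nlinarith [hπt.1, hπt.2]
  have key2 : ∑ y ∈ Y.filter (fun y => ¬ 0 < y),
      |pCond Y p true y * (1 - π true y) - pCond Y p false y * (1 - π false y)|
      ≤ ∑ y ∈ Y.filter (fun y => ¬ 0 < y),
        (|pCond Y p true y - pCond Y p false y| + pCond Y p false y * π false y) := by
    refine Finset.sum_le_sum fun y hy => ?_
    obtain ⟨hyY, hnp⟩ := Finset.mem_filter.mp hy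
    have hyneg : y < 0 := lt_of_le_of_ne (not_lt.mp hnp) (hp.1 y hyY)
    have hq_t := q_nonneg hp true hyY
    have hq_f := q_nonneg hp false hyY
    have hπf := hadm false y hyY
    have ha0 : pCond Y p true y * π true y = 0 := by
      rcases hq_t.lt_or_eq with hq | hq
      · rw [hnA y hyY hyneg hq, mul_zero]
      · rw [← hq, zero_mul]
    have e : pCond Y p true y * (1 - π true y) - pCond Y p false y * (1 - π false y)
        = (pCond Y p true y - pCond Y p false y) + pCond Y p false y * π false y := by
      have : pCond Y p true y * (1 - π true y) - pCond Y p false y * (1 - π false y)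
          = (pCond Y p true y - pCond Y p false y) + pCond Y p false y * π false y
            - pCond Y p true y * π true y := by ring
      rw [this, ha0, sub_zero]
    rw [e]
    calc |(pCond Y p true y - pCond Y p false y) + pCond Y p false y * π false y|
        ≤ |pCond Y p true y - pCond Y p false y| + |pCond Y p false y * π false y| :=
          abs_add_le _ _
      _ = |pCond Y p true y - pCond Y p false y| + pCond Y p false y * π false y := by
          rw [abs_of_nonneg (mul_nonneg hq_f hπf.1)]
  -- bookkeeping
  rw [Finset.sum_add_distrib] at key1 key2
  have e2 : ∑ y ∈ Y.filter (fun y => 0 < y), pCond Y p true y * π true y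
      = selRate Y p π true := by
    rw [selRate_split Y p π true, neg_part_zero hp hnA, add_zero]
  have e3 : ∑ y ∈ Y.filter (fun y => 0 < y), pCond Y p false y * π false y
      = posRate Y p false := pos_part_full hp hfB
  have e4 : selRate Y p π false
      = posRate Y p false + ∑ y ∈ Y.filter (fun y => ¬ 0 < y), pCond Y p false y * π false y := by
    rw [selRate_split Y p π false, e3]
  have e1 : ∑ y ∈ Y.filter (fun y => 0 < y),
      (pCond Y p false y - pCond Y p true y * π true y)
      = posRate Y p false - selRate Y p π true := by
    rw [Finset.sum_sub_distrib, e2, posRate]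
  linarith [key1, key2]
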